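/- Let p > 1, ε > 0, and let ρ : [0, ∞) → (0, ∞) be Borel measurable with R_{p,ρ} = ∫_0^∞ e^{-εpt/(p-1)} ρ(t)^{1/(1-p)} dt < ∞. Let f : [0, ∞) → ℝ and let g : [0, ∞) → [0, ∞) be measurable with ∫_0^∞ g(t)^p ρ(t) dt < ∞, and suppose |f(t₂) − f(t₁)| ≤ ∫_{t₁}^{t₂} g(s) e^{-εs} ds for all 0 ≤ t₁ ≤ t₂. Then the limit L = lim_{t→∞} f(t) exists and is finite, and |L| ≤ |f(0)| + ( ∫_0^∞ g(t)^p ρ(t) dt )^{1/p} · R_{p,ρ}^{(p-1)/p}. -/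

import Mathlib

open MeasureTheory
open scoped ENNReal

/-- one-dimensional core of Lemma 3.1 for `p > 1`: if
`R_{p,ρ} = ∫_0^∞ e^{-εpt/(p-1)} ρ(t)^{1/(1-p)} dt < ∞` and `f` satisfies the
oscillation bound `|f(t₂) − f(t₁)| ≤ ∫_{t₁}^{t₂} g e^{-εs} ds` with `∫_0^∞ g^p ρ < ∞`,
then `f` has a finite limit `L` at `∞` with
`|L| ≤ |f 0| + (∫_0^∞ g^p ρ)^{1/p} · R_{p,ρ}^{(p-1)/p}`. -/
theorem stmt_16 (p ε : ℝ) (hp : 1 < p) (hε : 0 < ε)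
    (ρ : ℝ → ℝ) (hρmeas : Measurable ρ) (hρpos : ∀ t, 0 ≤ t → 0 < ρ t)
    (hR : IntegrableOn
      (fun t => Real.exp (-(ε * p * t) / (p - 1)) * ρ t ^ (1 / (1 - p))) (Set.Ici 0))
    (f g : ℝ → ℝ) (hfmeas : Measurable f) (hgmeas : Measurable g) (hg0 : ∀ t, 0 ≤ g t)
    (hgint : IntegrableOn (fun t => g t ^ p * ρ t) (Set.Ici 0))
    (hosc : ∀ t₁ t₂ : ℝ, 0 ≤ t₁ → t₁ ≤ t₂ →
      ENNReal.ofReal |f t₂ - f t₁| ≤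
        ∫⁻ s in Set.Icc t₁ t₂, ENNReal.ofReal (g s * Real.exp (-(ε * s)))) :
    ∃ L : ℝ, Filter.Tendsto f Filter.atTop (nhds L) ∧
      |L| ≤ |f 0| + (∫ t in Set.Ici (0 : ℝ), g t ^ p * ρ t) ^ (1 / p) *
        (∫ t in Set.Ici (0 : ℝ),
          Real.exp (-(ε * p * t) / (p - 1)) * ρ t ^ (1 / (1 - p))) ^ ((p - 1) / p) := by
  have hp0 : (0:ℝ) < p := lt_trans zero_lt_one hp
  have hp1 : (0:ℝ) < p - 1 := by linarith
  set q : ℝ := p / (p - 1) with hq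
  have hpq : p.HolderConjugate q := Real.HolderConjugate.conjExponent hp
  set A : ℝ := ∫ t in Set.Ici (0 : ℝ), g t ^ p * ρ t with hA
  set R : ℝ := ∫ t in Set.Ici (0 : ℝ),
      Real.exp (-(ε * p * t) / (p - 1)) * ρ t ^ (1 / (1 - p)) with hRdef
  have hAnn : 0 ≤ A := setIntegral_nonneg measurableSet_Ici (fun t ht => by
    have h1 := hρpos t ht
    have h2 := hg0 t
    positivity)
  have hRnn : 0 ≤ R := setIntegral_nonneg measurableSet_Ici (fun t ht => by
    have := hρpos t ht
    positivity)
  set C : ℝ := A ^ (1/p) * R ^ ((p-1)/p) with hC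
  have hCnn : 0 ≤ C := by positivity
  set h : ℝ → ℝ := fun s => g s * Real.exp (-(ε * s)) with hh
  have hhnn : ∀ s, 0 ≤ h s := fun s => mul_nonneg (hg0 s) (Real.exp_pos _).le
  have hhmeas : Measurable h := hgmeas.mul (Real.measurable_exp.comp ((measurable_const.mul measurable_id).neg))
  -- Hölder
  set φ : ℝ → ℝ≥0∞ := fun s => ENNReal.ofReal (g s * ρ s ^ (1/p)) with hφ
  set ψ : ℝ → ℝ≥0∞ := fun s => ENNReal.ofReal (Real.exp (-(ε * s)) * ρ s ^ (-(1/p))) with hψ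
  set ν : Measure ℝ := volume.restrict (Set.Ici 0) with hν
  have hφm : Measurable φ := by
    apply ENNReal.measurable_ofReal.comp
    exact hgmeas.mul (hρmeas.pow_const _)
  have hψm : Measurable ψ := by
    apply ENNReal.measurable_ofReal.comp
    exact (Real.measurable_exp.comp ((measurable_const.mul measurable_id).neg) : Measurable fun s => Real.exp (-(ε*s))).mul (hρmeas.pow_const _)
  have holder := ENNReal.lintegral_mul_le_Lp_mul_Lq ν hpq hφm.aemeasurable hψm.aemeasurable
  have hHeq : ∫⁻ s, ENNReal.ofReal (h s) ∂ν = ∫⁻ s, φ s * ψ s ∂ν := by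
    rw [hν, setLIntegral_congr_fun measurableSet_Ici]
    intro s hs
    have hρs : 0 < ρ s := hρpos s hs
    have h1 : ρ s ^ (1/p) * ρ s ^ (-(1/p)) = 1 := by
      rw [← Real.rpow_add hρs]; simp
    have h2 : g s * ρ s ^ (1/p) * (Real.exp (-(ε * s)) * ρ s ^ (-(1/p)))
        = g s * Real.exp (-(ε * s)) := by
      calc g s * ρ s ^ (1/p) * (Real.exp (-(ε * s)) * ρ s ^ (-(1/p)))
          = g s * Real.exp (-(ε * s)) * (ρ s ^ (1/p) * ρ s ^ (-(1/p))) := by ring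
        _ = g s * Real.exp (-(ε * s)) := by rw [h1, mul_one]
    show ENNReal.ofReal (h s) = φ s * ψ s
    rw [show φ s * ψ s = ENNReal.ofReal (g s * ρ s ^ (1/p) * (Real.exp (-(ε * s)) * ρ s ^ (-(1/p)))) from
      (ENNReal.ofReal_mul (mul_nonneg (hg0 s) (Real.rpow_nonneg hρs.le _))).symm, h2]
  have hφp : ∫⁻ s, φ s ^ p ∂ν = ENNReal.ofReal A := by
    rw [hA, ofReal_integral_eq_lintegral_ofReal hgint]
    · rw [hν, setLIntegral_congr_fun measurableSet_Ici]
      intro s hs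
      have hρs : 0 < ρ s := hρpos s hs
      have h2 : (g s * ρ s ^ (1/p)) ^ p = g s ^ p * ρ s := by
        rw [Real.mul_rpow (hg0 s) (Real.rpow_nonneg hρs.le _), ← Real.rpow_mul hρs.le,
          one_div_mul_cancel hp0.ne', Real.rpow_one]
      show φ s ^ p = ENNReal.ofReal (g s ^ p * ρ s)
      rw [show φ s = ENNReal.ofReal (g s * ρ s ^ (1/p)) from rfl,
        ENNReal.ofReal_rpow_of_nonneg (mul_nonneg (hg0 s) (Real.rpow_nonneg hρs.le _)) hp0.le, h2]
    · filter_upwards [ae_restrict_mem measurableSet_Ici] with s hs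
      have h1 := hρpos s hs
      have h2 := hg0 s
      positivity
  have hψq : ∫⁻ s, ψ s ^ q ∂ν = ENNReal.ofReal R := by
    rw [hRdef, ofReal_integral_eq_lintegral_ofReal hR]
    · rw [hν, setLIntegral_congr_fun measurableSet_Ici]
      intro s hs
      have hρs : 0 < ρ s := hρpos s hs
      have h2 : (Real.exp (-(ε * s)) * ρ s ^ (-(1/p))) ^ q
          = Real.exp (-(ε * p * s) / (p - 1)) * ρ s ^ (1 / (1 - p)) := by
        rw [Real.mul_rpow (Real.exp_pos _).le (Real.rpow_nonneg hρs.le _),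
          ← Real.exp_mul, ← Real.rpow_mul hρs.le]
        have hne : p - 1 ≠ 0 := hp1.ne'
        have hne2 : (1:ℝ) - p ≠ 0 := by intro hcon; apply hne; linarith
        have e1 : -(ε * s) * q = -(ε * p * s) / (p - 1) := by
          rw [hq, mul_div_assoc', neg_div, neg_mul, show ε * s * p = ε * p * s by ring]
          exact neg_div _ _
        have e2 : -(1/p) * q = 1 / (1 - p) := by
          rw [hq]; field_simp; ring
        rw [e1, e2]
      show ψ s ^ q = ENNReal.ofReal (Real.exp (-(ε * p * s) / (p - 1)) * ρ s ^ (1 / (1 - p)))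
      rw [show ψ s = ENNReal.ofReal (Real.exp (-(ε * s)) * ρ s ^ (-(1/p))) from rfl,
        ENNReal.ofReal_rpow_of_nonneg
          (mul_nonneg (Real.exp_pos _).le (Real.rpow_nonneg hρs.le _)) hpq.symm.nonneg, h2]
    · filter_upwards [ae_restrict_mem measurableSet_Ici] with s hs
      have := hρpos s hs
      positivity
  have hHle : ∫⁻ s, ENNReal.ofReal (h s) ∂ν ≤ ENNReal.ofReal C := by
    rw [hHeq]
    refine le_trans (le_of_eq (by simp [Pi.mul_apply]) |>.trans holder) ?_
    rw [hφp, hψq, hC, ENNReal.ofReal_mul (by positivity),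
      ENNReal.ofReal_rpow_of_nonneg hAnn (by positivity),
      ENNReal.ofReal_rpow_of_nonneg hRnn (by positivity)]
    have : 1 / q = (p-1)/p := by rw [hq]; field_simp
    rw [this]
  -- integrability of h on Ici 0
  have hhint : IntegrableOn h (Set.Ici 0) := by
    refine ⟨hhmeas.aestronglyMeasurable, ?_⟩
    rw [hasFiniteIntegral_iff_ofReal (Filter.Eventually.of_forall hhnn)]
    exact lt_of_le_of_lt hHle ENNReal.ofReal_lt_top
  have hIci_nn : (0:ℝ→ℝ) ≤ᵐ[volume.restrict (Set.Ici 0)] h :=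
    Filter.Eventually.of_forall hhnn
  have hIle : ∫ s in Set.Ici (0:ℝ), h s ≤ C := by
    have heq : ENNReal.ofReal (∫ s in Set.Ici (0:ℝ), h s)
        = ∫⁻ s, ENNReal.ofReal (h s) ∂ν :=
      ofReal_integral_eq_lintegral_ofReal hhint hIci_nn
    exact (ENNReal.ofReal_le_ofReal_iff hCnn).1 (heq ▸ hHle : _)
  set F : ℝ → ℝ := fun t => ∫ s in Set.Icc 0 t, h s with hF
  have hFle : ∀ t, F t ≤ ∫ s in Set.Ici (0:ℝ), h s := fun t =>
    setIntegral_mono_set hhint hIci_nn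
      (HasSubset.Subset.eventuallyLE Set.Icc_subset_Ici_self)
  have hFmono : Monotone F := fun t₁ t₂ h12 =>
    setIntegral_mono_set (hhint.mono_set Set.Icc_subset_Ici_self)
      (Filter.Eventually.of_forall hhnn)
      (HasSubset.Subset.eventuallyLE (Set.Icc_subset_Icc_right h12))
  have hFtend : Filter.Tendsto F Filter.atTop (nhds (⨆ t, F t)) :=
    tendsto_atTop_ciSup hFmono
      ⟨∫ s in Set.Ici (0:ℝ), h s, by rintro _ ⟨t, rfl⟩; exact hFle t⟩
  have hFc : CauchySeq F := hFtend.cauchySeq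
  have key : ∀ t₁ t₂ : ℝ, 0 ≤ t₁ → t₁ ≤ t₂ → |f t₂ - f t₁| ≤ F t₂ - F t₁ := by
    intro t₁ t₂ h0 h12
    have hIcc : IntegrableOn h (Set.Icc t₁ t₂) :=
      hhint.mono_set (fun x hx => le_trans h0 hx.1)
    have hlin : (∫⁻ s in Set.Icc t₁ t₂, ENNReal.ofReal (g s * Real.exp (-(ε * s))))
        = ENNReal.ofReal (∫ s in Set.Icc t₁ t₂, h s) :=
      (ofReal_integral_eq_lintegral_ofReal hIcc (Filter.Eventually.of_forall hhnn)).symm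
    have hle : |f t₂ - f t₁| ≤ ∫ s in Set.Icc t₁ t₂, h s := by
      refine (ENNReal.ofReal_le_ofReal_iff ?_).1 ((hosc t₁ t₂ h0 h12).trans_eq hlin)
      exact setIntegral_nonneg measurableSet_Icc (fun x _ => hhnn x)
    have hsplit : F t₂ = F t₁ + ∫ s in Set.Icc t₁ t₂, h s := by
      have e1 : (∫ s in Set.Icc t₁ t₂, h s) = ∫ s in Set.Ioc t₁ t₂, h s :=
        integral_Icc_eq_integral_Ioc
      have e2 : Set.Icc (0:ℝ) t₂ = Set.Icc 0 t₁ ∪ Set.Ioc t₁ t₂ :=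
        (Set.Icc_union_Ioc_eq_Icc h0 h12).symm
      have e3 : Disjoint (Set.Icc (0:ℝ) t₁) (Set.Ioc t₁ t₂) :=
        Set.disjoint_left.2 (fun x hx hx' => absurd hx.2 (not_le.2 hx'.1))
      calc F t₂ = ∫ s in Set.Icc 0 t₂, h s := rfl
        _ = ∫ s in Set.Icc 0 t₁ ∪ Set.Ioc t₁ t₂, h s := by rw [e2]
        _ = (∫ s in Set.Icc 0 t₁, h s) + ∫ s in Set.Ioc t₁ t₂, h s :=
          setIntegral_union e3 measurableSet_Ioc
            (hhint.mono_set Set.Icc_subset_Ici_self)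
            (hhint.mono_set (fun x hx => le_trans h0 hx.1.le))
        _ = F t₁ + ∫ s in Set.Icc t₁ t₂, h s := by rw [e1]
    linarith
  have hcf : CauchySeq f := by
    rw [Metric.cauchySeq_iff]
    intro δ hδ
    obtain ⟨N, hN⟩ := Metric.cauchySeq_iff.1 hFc δ hδ
    refine ⟨max N 0, fun t₂ ht₂ t₁ ht₁ => ?_⟩
    have h1 : N ≤ t₁ := le_trans (le_max_left _ _) ht₁
    have h2 : N ≤ t₂ := le_trans (le_max_left _ _) ht₂
    have h01 : (0:ℝ) ≤ t₁ := le_trans (le_max_right _ _) ht₁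
    have h02 : (0:ℝ) ≤ t₂ := le_trans (le_max_right _ _) ht₂
    rcases le_total t₁ t₂ with hle | hle
    · have := key t₁ t₂ h01 hle
      have hd := hN t₂ h2 t₁ h1
      rw [Real.dist_eq] at hd ⊢
      calc |f t₂ - f t₁| ≤ F t₂ - F t₁ := this
        _ ≤ |F t₂ - F t₁| := le_abs_self _
        _ < δ := hd
    · have := key t₂ t₁ h02 hle
      have hd := hN t₁ h1 t₂ h2
      rw [Real.dist_eq] at hd ⊢
      calc |f t₂ - f t₁| = |f t₁ - f t₂| := abs_sub_comm _ _
        _ ≤ F t₁ - F t₂ := this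
        _ ≤ |F t₁ - F t₂| := le_abs_self _
        _ < δ := hd
  obtain ⟨L, hL⟩ := cauchySeq_tendsto_of_complete hcf
  refine ⟨L, hL, ?_⟩
  have hF0 : F 0 = 0 := by
    show (∫ s in Set.Icc (0:ℝ) 0, h s) = 0
    rw [Set.Icc_self]
    exact setIntegral_measure_zero _ (measure_singleton 0)
  have hbnd : ∀ᶠ t in Filter.atTop, |f t| ≤ |f 0| + C := by
    filter_upwards [Filter.eventually_ge_atTop (0:ℝ)] with t ht
    have h1 : |f t - f 0| ≤ F t - F 0 := key 0 t le_rfl ht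
    have h2 : F t ≤ C := le_trans (hFle t) hIle
    calc |f t| = |f 0 + (f t - f 0)| := by ring_nf
      _ ≤ |f 0| + |f t - f 0| := abs_add_le _ _
      _ ≤ |f 0| + C := by linarith
  exact le_of_tendsto hL.abs hbnd
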